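/- For the regularized optimal transport objective F(X) = γ Σ_{i,j} x_{ij} ln x_{ij} + Σ_{i,j} c_{ij} x_{ij} with γ > 0, F is γ-strongly convex with respect to the ℓ₁ norm on the transportation polytope {X ∈ ℝ_+^{p×p} : Xe = a₁, Xᵀe = a₂} with a₁, a₂ in the unit simplex (so that Σ_{i,j} x_{ij} = 1). -/

import Mathlib

open Finset

noncomputable def gfun (t : ℝ) : ℝ := t * Real.log t - t + 1 - (3/2) * ((t-1)^2/(t+2))
noncomputable def psifun (t : ℝ) : ℝ := Real.log t - (3/2) * ((t-1)*(t+5)/(t+2)^2)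

lemma hasDerivAt_gfun {t : ℝ} (ht : 0 < t) : HasDerivAt gfun (psifun t) t := by
  have ht2 : t + 2 ≠ 0 := by linarith
  have h1 : HasDerivAt (fun t : ℝ => t * Real.log t) (Real.log t + 1) t := by
    have := (hasDerivAt_id t).mul (Real.hasDerivAt_log ht.ne')
    refine this.congr_deriv ?_
    field_simp
    simp only [id_eq]; ring
  have h2 : HasDerivAt (fun t : ℝ => (t-1)^2) (2*(t-1)) t := by
    have := ((hasDerivAt_id t).sub_const 1).pow 2
    refine this.congr_deriv ?_; simp [id_eq]
  have h3 : HasDerivAt (fun t : ℝ => t+2) 1 t := (hasDerivAt_id t).add_const 2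
  have h4 := h2.div h3 ht2
  have h5 := (((h1.sub (hasDerivAt_id t)).add_const 1).sub (h4.const_mul (3/2 : ℝ)))
  refine h5.congr_deriv ?_
  unfold psifun
  field_simp
  ring

lemma hasDerivAt_psifun {t : ℝ} (ht : 0 < t) :
    HasDerivAt psifun ((t-1)^2*(t+8)/(t*(t+2)^3)) t := by
  have ht2 : (t + 2 : ℝ) ≠ 0 := by linarith
  have ht2' : ((t + 2 : ℝ)^2) ≠ 0 := pow_ne_zero _ ht2
  have h1 : HasDerivAt (fun t : ℝ => (t-1)*(t+5)) ((t+5) + (t-1)) t := by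
    have := ((hasDerivAt_id t).sub_const 1).mul ((hasDerivAt_id t).add_const 5)
    refine this.congr_deriv ?_; simp [id_eq]
  have h2 : HasDerivAt (fun t : ℝ => (t+2)^2) (2*(t+2)) t := by
    have := ((hasDerivAt_id t).add_const 2).pow 2
    refine this.congr_deriv ?_; simp [id_eq]
  have h3 := h1.div h2 ht2'
  have h4 := (Real.hasDerivAt_log ht.ne').sub (h3.const_mul (3/2 : ℝ))
  refine h4.congr_deriv ?_
  field_simp
  ring

lemma psifun_mono : MonotoneOn psifun (Set.Ioi (0:ℝ)) := by
  have hint : interior (Set.Ioi (0:ℝ)) = Set.Ioi 0 := isOpen_Ioi.interior_eq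
  apply monotoneOn_of_deriv_nonneg (convex_Ioi 0)
  · exact fun t ht => (hasDerivAt_psifun ht).continuousAt.continuousWithinAt
  · rw [hint]; exact fun t ht => (hasDerivAt_psifun ht).differentiableAt.differentiableWithinAt
  · rw [hint]
    intro t ht
    rw [(hasDerivAt_psifun ht).deriv]
    simp only [Set.mem_Ioi] at ht
    have h8 : (0:ℝ) < t + 8 := by linarith
    have h2 : (0:ℝ) < t + 2 := by linarith
    positivity

lemma gfun_nonneg {t : ℝ} (ht : 0 < t) : 0 ≤ gfun t := by
  have hpsi1 : psifun 1 = 0 := by unfold psifun; norm_num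
  have hg1 : gfun 1 = 0 := by unfold gfun; norm_num
  rcases le_or_gt 1 t with h | h
  · have hmono : MonotoneOn gfun (Set.Ici (1:ℝ)) := by
      apply monotoneOn_of_deriv_nonneg (convex_Ici 1)
      · exact fun s hs => (hasDerivAt_gfun (by simp only [Set.mem_Ici] at hs; linarith)).continuousAt.continuousWithinAt
      · rw [interior_Ici]
        exact fun s hs => (hasDerivAt_gfun (by simp only [Set.mem_Ioi] at hs; linarith)).differentiableAt.differentiableWithinAt
      · rw [interior_Ici]
        intro s hs
        simp only [Set.mem_Ioi] at hs
        rw [(hasDerivAt_gfun (by linarith)).deriv]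
        have := psifun_mono (by norm_num : (1:ℝ) ∈ Set.Ioi 0)
          (by simp only [Set.mem_Ioi]; linarith : s ∈ Set.Ioi (0:ℝ)) hs.le
        linarith [hpsi1 ▸ this]
    have := hmono (Set.self_mem_Ici) (h : t ∈ Set.Ici (1:ℝ)) h
    linarith [hg1 ▸ this]
  · have hanti : AntitoneOn gfun (Set.Ioc (0:ℝ) 1) := by
      apply antitoneOn_of_deriv_nonpos (convex_Ioc 0 1)
      · exact fun s hs => (hasDerivAt_gfun hs.1).continuousAt.continuousWithinAt
      · rw [interior_Ioc]
        exact fun s hs => (hasDerivAt_gfun hs.1).differentiableAt.differentiableWithinAt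
      · rw [interior_Ioc]
        intro s hs
        rw [(hasDerivAt_gfun hs.1).deriv]
        have := psifun_mono (hs.1 : s ∈ Set.Ioi (0:ℝ)) (by norm_num : (1:ℝ) ∈ Set.Ioi 0) hs.2.le
        linarith [hpsi1 ▸ this]
    have := hanti (⟨ht, h.le⟩ : t ∈ Set.Ioc (0:ℝ) 1) (by norm_num : (1:ℝ) ∈ Set.Ioc (0:ℝ) 1) h.le
    linarith [hg1 ▸ this]

lemma pointwise_ineq {x y : ℝ} (hx : 0 < x) (hy : 0 < y) :
    (3/2) * ((y-x)^2/(y+2*x)) ≤ y * (Real.log y - Real.log x) - (y - x) := by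
  have ht : 0 < y / x := div_pos hy hx
  have h := gfun_nonneg ht
  unfold gfun at h
  rw [Real.log_div hy.ne' hx.ne'] at h
  have hm := mul_nonneg hx.le h
  have hd : (0:ℝ) < y + 2*x := by linarith
  have hd2 : y/x + 2 ≠ 0 := by positivity
  have e1 : x * ((y/x-1)^2/(y/x+2)) = (y-x)^2/(y+2*x) := by
    field_simp
  have e2 : x * (y/x * (Real.log y - Real.log x) - y/x + 1) =
      y * (Real.log y - Real.log x) - y + x := by
    field_simp
  nlinarith [hm, e1, e2]

/-- The regularized optimal transport objective
`F(X) = γ ∑ x_{ij} ln x_{ij} + ∑ c_{ij} x_{ij}` is `γ`-strongly convex with respect to the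
`ℓ₁` norm on the (relative interior of the) transportation polytope
`{X ≥ 0 : X e = a₁, Xᵀ e = a₂}` with `a₁, a₂` in the unit simplex:
`F(Y) ≥ F(X) + ⟨∇F(X), Y - X⟩ + (γ/2) ‖Y - X‖₁²`. -/
theorem rot_objective_strongly_convex_l1
    (p : ℕ) (γ : ℝ) (hγ : 0 < γ)
    (c : Fin p → Fin p → ℝ) (hc : ∀ i j, 0 ≤ c i j)
    (a₁ a₂ : Fin p → ℝ)
    (ha₁ : (∀ i, 0 ≤ a₁ i) ∧ ∑ i, a₁ i = 1) (ha₂ : (∀ i, 0 ≤ a₂ i) ∧ ∑ i, a₂ i = 1)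
    (F : (Fin p → Fin p → ℝ) → ℝ)
    (hF : ∀ X, F X = γ * (∑ i, ∑ j, X i j * Real.log (X i j)) + ∑ i, ∑ j, c i j * X i j)
    (X Y : Fin p → Fin p → ℝ)
    (hXpos : ∀ i j, 0 < X i j) (hYpos : ∀ i j, 0 < Y i j)
    (hXrow : ∀ i, ∑ j, X i j = a₁ i) (hXcol : ∀ j, ∑ i, X i j = a₂ j)
    (hYrow : ∀ i, ∑ j, Y i j = a₁ i) (hYcol : ∀ j, ∑ i, Y i j = a₂ j) :
    F Y ≥ F X + (∑ i, ∑ j, (γ * (Real.log (X i j) + 1) + c i j) * (Y i j - X i j)) +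
      (γ / 2) * (∑ i, ∑ j, |Y i j - X i j|) ^ 2 := by
  -- abbreviations over the product index
  set κ := Fin p × Fin p
  set x : κ → ℝ := fun k => X k.1 k.2 with hxdef
  set y : κ → ℝ := fun k => Y k.1 k.2 with hydef
  have hxpos : ∀ k : κ, 0 < x k := fun k => hXpos k.1 k.2
  have hypos : ∀ k : κ, 0 < y k := fun k => hYpos k.1 k.2
  -- total masses
  have hsumX : ∑ k : κ, x k = 1 := by
    rw [Fintype.sum_prod_type]
    simp only [hxdef]
    rw [Finset.sum_congr rfl (fun i _ => hXrow i)]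
    exact ha₁.2
  have hsumY : ∑ k : κ, y k = 1 := by
    rw [Fintype.sum_prod_type]
    simp only [hydef]
    rw [Finset.sum_congr rfl (fun i _ => hYrow i)]
    exact ha₁.2
  -- weights
  set w : κ → ℝ := fun k => y k + 2 * x k with hwdef
  have hwpos : ∀ k, 0 < w k := fun k => by have := hxpos k; have := hypos k; simp [hwdef]; linarith
  have hsumw : ∑ k : κ, w k = 3 := by
    simp only [hwdef]
    rw [Finset.sum_add_distrib, ← Finset.mul_sum, hsumX, hsumY]
    norm_num
  -- Cauchy–Schwarz: (∑ |y-x|)² ≤ 3 ∑ (y-x)²/w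
  have hcs : (∑ k : κ, |y k - x k|) ^ 2 ≤ 3 * ∑ k : κ, (y k - x k)^2 / w k := by
    have h := Finset.sum_mul_sq_le_sq_mul_sq Finset.univ
      (fun k : κ => |y k - x k| / Real.sqrt (w k)) (fun k : κ => Real.sqrt (w k))
    have e1 : ∀ k : κ, |y k - x k| / Real.sqrt (w k) * Real.sqrt (w k) = |y k - x k| := by
      intro k
      have : Real.sqrt (w k) ≠ 0 := (Real.sqrt_pos.2 (hwpos k)).ne'
      field_simp
    have e2 : ∀ k : κ, (|y k - x k| / Real.sqrt (w k))^2 = (y k - x k)^2 / w k := by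
      intro k
      rw [div_pow, sq_abs, Real.sq_sqrt (hwpos k).le]
    have e3 : ∀ k : κ, (Real.sqrt (w k))^2 = w k := fun k => Real.sq_sqrt (hwpos k).le
    rw [Finset.sum_congr rfl (fun k _ => e1 k), Finset.sum_congr rfl (fun k _ => e2 k),
      Finset.sum_congr rfl (fun k _ => e3 k), hsumw] at h
    linarith
  -- pointwise Bregman lower bound
  have hpoint : ∀ k : κ, (3/2) * ((y k - x k)^2 / w k) ≤
      y k * Real.log (y k) - x k * Real.log (x k) - (Real.log (x k) + 1) * (y k - x k) := by
    intro k
    have h := pointwise_ineq (hxpos k) (hypos k)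
    have : y k * (Real.log (y k) - Real.log (x k)) - (y k - x k)
        = y k * Real.log (y k) - x k * Real.log (x k) - (Real.log (x k) + 1) * (y k - x k) := by
      ring
    rw [this] at h
    simpa [hwdef] using h
  -- Bregman divergence lower bound
  have hbreg : (1/2) * (∑ k : κ, |y k - x k|) ^ 2 ≤
      ∑ k : κ, (y k * Real.log (y k) - x k * Real.log (x k)
        - (Real.log (x k) + 1) * (y k - x k)) := by
    have h1 : (3/2) * ∑ k : κ, (y k - x k)^2 / w k ≤
        ∑ k : κ, (y k * Real.log (y k) - x k * Real.log (x k)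
          - (Real.log (x k) + 1) * (y k - x k)) := by
      rw [Finset.mul_sum]
      exact Finset.sum_le_sum fun k _ => hpoint k
    linarith
  -- rewrite double sums as product sums
  rw [hF X, hF Y, ge_iff_le]
  rw [← show (∑ k : κ, y k * Real.log (y k)) = ∑ i, ∑ j, Y i j * Real.log (Y i j) from
    Fintype.sum_prod_type _]
  rw [← show (∑ k : κ, x k * Real.log (x k)) = ∑ i, ∑ j, X i j * Real.log (X i j) from
    Fintype.sum_prod_type _]
  rw [← show (∑ k : κ, (c k.1 k.2 * y k)) = ∑ i, ∑ j, c i j * Y i j from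
    Fintype.sum_prod_type _]
  rw [← show (∑ k : κ, (c k.1 k.2 * x k)) = ∑ i, ∑ j, c i j * X i j from
    Fintype.sum_prod_type _]
  rw [← show (∑ k : κ, (γ * (Real.log (x k) + 1) + c k.1 k.2) * (y k - x k))
      = ∑ i, ∑ j, (γ * (Real.log (X i j) + 1) + c i j) * (Y i j - X i j) from
    Fintype.sum_prod_type _]
  rw [← show (∑ k : κ, |y k - x k|) = ∑ i, ∑ j, |Y i j - X i j| from
    Fintype.sum_prod_type _]
  -- combine
  have expand : γ * ∑ k : κ, y k * Real.log (y k) + ∑ k : κ, c k.1 k.2 * y k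
      = (γ * ∑ k : κ, x k * Real.log (x k) + ∑ k : κ, c k.1 k.2 * x k)
        + ∑ k : κ, (γ * (Real.log (x k) + 1) + c k.1 k.2) * (y k - x k)
        + γ * ∑ k : κ, (y k * Real.log (y k) - x k * Real.log (x k)
          - (Real.log (x k) + 1) * (y k - x k)) := by
    simp only [Finset.mul_sum, ← Finset.sum_add_distrib]
    exact Finset.sum_congr rfl fun k _ => by ring
  have hγb := mul_le_mul_of_nonneg_left hbreg hγ.le
  linarith
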